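/- For every unit vector x ∈ ℝ⁴, the two vectors Dψₓ(X₂(x)) and Dψₓ(X₃(x)) form an orthonormal pair in ℝ³ tangent to the sphere S²(1/2) at ψ(x): they are unit vectors, mutually orthogonal, and both orthogonal to ψ(x). -/

import Mathlib

noncomputable section

/-- The Hopf map `ψ : ℝ⁴ → ℝ³`. -/
def hopf (x : EuclideanSpace ℝ (Fin 4)) : EuclideanSpace ℝ (Fin 3) :=
  (WithLp.equiv 2 (Fin 3 → ℝ)).symm
    ![x 0 * x 2 + x 1 * x 3, x 1 * x 2 - x 0 * x 3,
      ((x 0) ^ 2 + (x 1) ^ 2 - (x 2) ^ 2 - (x 3) ^ 2) / 2]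

/-- The vector field `X₂(x) = (−x⁴, −x³, x², x¹)` on `ℝ⁴`. -/
def X2 (x : EuclideanSpace ℝ (Fin 4)) : EuclideanSpace ℝ (Fin 4) :=
  (WithLp.equiv 2 (Fin 4 → ℝ)).symm ![-x 3, -x 2, x 1, x 0]

/-- The vector field `X₃(x) = (−x³, x⁴, x¹, −x²)` on `ℝ⁴`. -/
def X3 (x : EuclideanSpace ℝ (Fin 4)) : EuclideanSpace ℝ (Fin 4) :=
  (WithLp.equiv 2 (Fin 4 → ℝ)).symm ![-x 2, x 3, x 0, -x 1]

/-- Coordinate projections on `ℝ⁴` as continuous linear maps. -/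
def P (i : Fin 4) : EuclideanSpace ℝ (Fin 4) →L[ℝ] ℝ := EuclideanSpace.proj i

/-- The (candidate) Fréchet derivative of the Hopf map at `x`. -/
def hopfD (x : EuclideanSpace ℝ (Fin 4)) :
    EuclideanSpace ℝ (Fin 4) →L[ℝ] EuclideanSpace ℝ (Fin 3) :=
  ((PiLp.continuousLinearEquiv 2 ℝ (fun _ : Fin 3 => ℝ)).symm :
      (Fin 3 → ℝ) →L[ℝ] EuclideanSpace ℝ (Fin 3)).comp
    (ContinuousLinearMap.pi ![x 2 • P 0 + x 0 • P 2 + x 3 • P 1 + x 1 • P 3,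
       x 2 • P 1 + x 1 • P 2 - (x 3 • P 0 + x 0 • P 3),
       x 0 • P 0 + x 1 • P 1 - x 2 • P 2 - x 3 • P 3])

lemma hopf_hasFDerivAt (x : EuclideanSpace ℝ (Fin 4)) :
    HasFDerivAt hopf (hopfD x) x := by
  have hP : ∀ i, HasFDerivAt (fun y : EuclideanSpace ℝ (Fin 4) => y i) (P i) x :=
    fun i => (P i).hasFDerivAt
  have hF : HasFDerivAt
      (fun y : EuclideanSpace ℝ (Fin 4) =>
        (![y 0 * y 2 + y 1 * y 3, y 1 * y 2 - y 0 * y 3,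
          (y 0 * y 0 + y 1 * y 1 - y 2 * y 2 - y 3 * y 3) * (2:ℝ)⁻¹] : Fin 3 → ℝ))
      (ContinuousLinearMap.pi ![x 2 • P 0 + x 0 • P 2 + x 3 • P 1 + x 1 • P 3,
       x 2 • P 1 + x 1 • P 2 - (x 3 • P 0 + x 0 • P 3),
       x 0 • P 0 + x 1 • P 1 - x 2 • P 2 - x 3 • P 3]) x := by
    rw [hasFDerivAt_pi']
    intro i
    fin_cases i
    · exact (((hP 0).mul (hP 2)).add ((hP 1).mul (hP 3))).congr_fderiv
        (by ext v; simp [P]; ring)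
    · exact (((hP 1).mul (hP 2)).sub ((hP 0).mul (hP 3))).congr_fderiv
        (by ext v; simp [P]; ring)
    · exact (((((hP 0).mul (hP 0)).add ((hP 1).mul (hP 1))).sub
        ((hP 2).mul (hP 2))).sub ((hP 3).mul (hP 3))).mul_const ((2:ℝ)⁻¹) |>.congr_fderiv
        (by ext v; simp [P]; ring)
  have h := (((PiLp.continuousLinearEquiv 2 ℝ (fun _ : Fin 3 => ℝ)).symm :
      (Fin 3 → ℝ) →L[ℝ] EuclideanSpace ℝ (Fin 3)).hasFDerivAt).comp x hF
  refine h.congr_of_eventuallyEq (Filter.Eventually.of_forall fun y => ?_)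
  ext i
  fin_cases i <;> simp [hopf] <;> ring

lemma hopfD_apply (x v : EuclideanSpace ℝ (Fin 4)) :
    hopfD x v = (WithLp.equiv 2 (Fin 3 → ℝ)).symm
      ![x 2 * v 0 + x 0 * v 2 + x 3 * v 1 + x 1 * v 3,
        x 2 * v 1 + x 1 * v 2 - (x 3 * v 0 + x 0 * v 3),
        x 0 * v 0 + x 1 * v 1 - x 2 * v 2 - x 3 * v 3] := by
  ext i
  fin_cases i <;> simp [hopfD, P, smul_eq_mul]

/-- For every unit `x`, `Dψₓ(X₂(x))` and `Dψₓ(X₃(x))` form an orthonormal pair in `ℝ³`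
tangent to the sphere `S²(1/2)` at `ψ(x)`. -/
theorem hopf_pushforward_orthonormal (x : EuclideanSpace ℝ (Fin 4)) (hx : ‖x‖ = 1) :
    ‖fderiv ℝ hopf x (X2 x)‖ = 1 ∧ ‖fderiv ℝ hopf x (X3 x)‖ = 1 ∧
    (inner ℝ (fderiv ℝ hopf x (X2 x)) (fderiv ℝ hopf x (X3 x)) : ℝ) = 0 ∧
    (inner ℝ (fderiv ℝ hopf x (X2 x)) (hopf x) : ℝ) = 0 ∧
    (inner ℝ (fderiv ℝ hopf x (X3 x)) (hopf x) : ℝ) = 0 := by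
  have hd : fderiv ℝ hopf x = hopfD x := (hopf_hasFDerivAt x).fderiv
  rw [EuclideanSpace.norm_eq] at hx
  have hs : x 0 ^ 2 + x 1 ^ 2 + x 2 ^ 2 + x 3 ^ 2 = 1 := by
    have := Real.sqrt_eq_one.mp hx
    simpa [Fin.sum_univ_four, sq_abs] using this
  have e2 : fderiv ℝ hopf x (X2 x) = (WithLp.equiv 2 (Fin 3 → ℝ)).symm
      ![2 * (x 0 * x 1) - 2 * (x 2 * x 3),
        x 1 ^ 2 + x 3 ^ 2 - x 0 ^ 2 - x 2 ^ 2,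
        -(2 * (x 0 * x 3)) - 2 * (x 1 * x 2)] := by
    rw [hd, hopfD_apply]
    ext i; fin_cases i <;> simp [X2] <;> ring
  have e3 : fderiv ℝ hopf x (X3 x) = (WithLp.equiv 2 (Fin 3 → ℝ)).symm
      ![x 0 ^ 2 - x 1 ^ 2 - x 2 ^ 2 + x 3 ^ 2,
        2 * (x 2 * x 3) + 2 * (x 0 * x 1),
        -(2 * (x 0 * x 2)) + 2 * (x 1 * x 3)] := by
    rw [hd, hopfD_apply]
    ext i; fin_cases i <;> simp [X3] <;> ring
  refine ⟨?_, ?_, ?_, ?_, ?_⟩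
  · rw [e2, EuclideanSpace.norm_eq]
    rw [Real.sqrt_eq_one]
    simp [Fin.sum_univ_three, sq_abs]
    nlinarith [hs]
  · rw [e3, EuclideanSpace.norm_eq]
    rw [Real.sqrt_eq_one]
    simp [Fin.sum_univ_three, sq_abs]
    nlinarith [hs]
  · rw [e2, e3]
    simp [PiLp.inner_apply, Fin.sum_univ_three, RCLike.inner_apply]
    ring
  · rw [e2]
    simp [hopf, PiLp.inner_apply, Fin.sum_univ_three, RCLike.inner_apply]
    ring
  · rw [e3]
    simp [hopf, PiLp.inner_apply, Fin.sum_univ_three, RCLike.inner_apply]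
    ring
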